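/- Let $X_N$ be the random lower triangular matrix whose entries on and below the diagonal are i.i.d., each equal to $\frac{1}{\delta(N)\,N}$ with probability $\delta(N)$ and $0$ otherwise, with $\delta(N) = N^{-d}$ for some fixed $0 < d < 1$. Then for all $u, v \in L^2[0,1]$, almost surely $\langle W_N X_N W_N^*(u), v\rangle \to \langle V(u), v\rangle$ as $N \to \infty$. -/

import Mathlib

open MeasureTheory ProbabilityTheory Filter

noncomputable section

/-- Lebesgue measure restricted to the unit interval `[0,1]`. -/
def μ01 : Measure ℝ := volume.restrict (Set.Icc (0:ℝ) 1)

instance : IsFiniteMeasure μ01 :=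
  ⟨by
    simp only [μ01, Measure.restrict_apply_univ]
    simp [Real.volume_Icc]⟩

/-- The function `e_i^N = √N · 𝟙_{[i/N,(i+1)/N]}` as an element of `L²[0,1]`
(here `i : Fin N` runs over `0, …, N-1`, corresponding to `1, …, N` in the paper). -/
def eN (N : ℕ) (i : Fin N) : Lp ℂ 2 μ01 :=
  indicatorConstLp 2 (measurableSet_Icc :
      MeasurableSet (Set.Icc ((i : ℝ) / N) (((i : ℝ) + 1) / N)))
    (measure_ne_top μ01 _) ((Real.sqrt N : ℝ) : ℂ)

/-- The isometry `W_N : ℂ^N → L²[0,1]`, `(a_1,…,a_N) ↦ ∑ a_i e_i^N`. -/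
def Wmap (N : ℕ) (a : EuclideanSpace ℂ (Fin N)) : Lp ℂ 2 μ01 :=
  ∑ i : Fin N, a i • eN N i

/-- The adjoint `W_N^* : L²[0,1] → ℂ^N`, `f ↦ (⟨f,e_1^N⟩, …, ⟨f,e_N^N⟩)`
(recall that Mathlib's inner product is conjugate-linear in the *first* slot,
so the paper's `⟨f, e⟩` is `inner e f`). -/
def Wstar (N : ℕ) (f : Lp ℂ 2 μ01) : EuclideanSpace ℂ (Fin N) :=
  (WithLp.equiv 2 (Fin N → ℂ)).symm fun i => @inner ℂ _ _ (eN N i) f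

/-- The deterministic lower-triangular matrix `T_N` whose entries on and below
the diagonal all equal `1/N`. -/
def TM (N : ℕ) : Matrix (Fin N) (Fin N) ℂ :=
  Matrix.of fun i j => if j ≤ i then ((N : ℂ))⁻¹ else 0

/-- Real-valued version of `T_N`. -/
def TMr (N : ℕ) : Matrix (Fin N) (Fin N) ℝ :=
  Matrix.of fun i j => if j ≤ i then ((N : ℝ))⁻¹ else 0

/-- The random matrix `X_N(ω) = (1/N)(X_{i,j}(ω))_{i,j}` (complex-valued version;
the hypothesis that the entries above the diagonal vanish is imposed separately). -/
def XM {Ω : Type*} (N : ℕ) (X : Fin N → Fin N → Ω → ℝ) (ω : Ω) :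
    Matrix (Fin N) (Fin N) ℂ :=
  Matrix.of fun i j => ((N : ℂ))⁻¹ * (X i j ω : ℂ)

/-- The random matrix `X_N(ω) = (1/N)(X_{i,j}(ω))_{i,j}` (real-valued version). -/
def XMr {Ω : Type*} (N : ℕ) (X : Fin N → Fin N → Ω → ℝ) (ω : Ω) :
    Matrix (Fin N) (Fin N) ℝ :=
  Matrix.of fun i j => ((N : ℝ))⁻¹ * X i j ω

/-- A matrix acting as an operator on `ℂ^N` (with its euclidean structure). -/
def matVec {N : ℕ} (M : Matrix (Fin N) (Fin N) ℂ) (u : EuclideanSpace ℂ (Fin N)) :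
    EuclideanSpace ℂ (Fin N) :=
  Matrix.toEuclideanLin M u

/-- The index set of the (closed) lower triangle of an `N × N` matrix. -/
def LTri (N : ℕ) : Type := {p : Fin N × Fin N // p.2 ≤ p.1}

/-- `V : L²[0,1] → L²[0,1]` is the Volterra operator: `V(f)(x) = ∫_0^x f(t) dt`. -/
def IsVolterra (V : Lp ℂ 2 μ01 → Lp ℂ 2 μ01) : Prop :=
  ∀ f : Lp ℂ 2 μ01, ∀ᵐ x ∂μ01, (V f : ℝ → ℂ) x = ∫ t in (0:ℝ)..x, (f : ℝ → ℂ) t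

lemma inner_eN (N : ℕ) (i : Fin N) (f : Lp ℂ 2 μ01) :
    (@inner ℂ _ _ (eN N i) f)
      = (Real.sqrt N : ℂ) * ∫ x in Set.Icc ((i:ℝ)/N) (((i:ℝ)+1)/N), (f : ℝ → ℂ) x ∂μ01 := by
  rw [eN, L2.inner_indicatorConstLp_eq_setIntegral_inner]
  simp_rw [RCLike.inner_apply]
  rw [integral_mul_const]
  norm_num
  ring

lemma cs_bound (s : Set ℝ) (hs : MeasurableSet s) (f : Lp ℂ 2 μ01) :
    ‖∫ x in s, (f : ℝ → ℂ) x ∂μ01‖ ≤ Real.sqrt (μ01 s).toReal * ‖f‖ := by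
  have h := norm_inner_le_norm (𝕜 := ℂ) (indicatorConstLp 2 hs (measure_ne_top μ01 s) (1:ℂ)) f
  rw [L2.inner_indicatorConstLp_one hs _ f] at h
  rw [norm_indicatorConstLp (by norm_num) (by norm_num)] at h
  simpa [Real.sqrt_eq_rpow, measureReal_def] using h

lemma mu01_Icc_subset (a b : ℝ) (h0 : 0 ≤ a) (h1 : b ≤ 1) :
    μ01 (Set.Icc a b) = ENNReal.ofReal (b - a) := by
  rw [μ01, Measure.restrict_apply measurableSet_Icc]
  rw [Set.inter_eq_left.mpr (Set.Icc_subset_Icc h0 h1), Real.volume_Icc]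

lemma eN_bounds (N : ℕ) (i : Fin N) : (0:ℝ) ≤ (i:ℝ)/N ∧ ((i:ℝ)+1)/N ≤ 1 := by
  have hN : (0:ℝ) < N := by exact_mod_cast Nat.pos_of_ne_zero (by rintro rfl; exact i.elim0)
  constructor
  · positivity
  · rw [div_le_one hN]
    have := i.isLt
    exact_mod_cast Nat.succ_le_of_lt this

lemma eN_orthonormal (N : ℕ) : Orthonormal ℂ (eN N) := by
  rw [orthonormal_iff_ite]
  intro i j
  have hN : (0:ℝ) < N := by exact_mod_cast Nat.pos_of_ne_zero (by rintro rfl; exact i.elim0)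
  rw [inner_eN]
  have hcoe : ∀ᵐ x ∂μ01, (eN N j : ℝ → ℂ) x
      = Set.indicator (Set.Icc ((j:ℝ)/N) (((j:ℝ)+1)/N)) (fun _ => ((Real.sqrt N : ℝ) : ℂ)) x :=
    indicatorConstLp_coeFn
  rw [setIntegral_congr_ae measurableSet_Icc (hcoe.mono fun x hx => fun _ => hx)]
  rw [setIntegral_indicator measurableSet_Icc, setIntegral_const]
  by_cases hij : i = j
  · subst hij
    simp only [if_pos rfl, Set.inter_self]
    rw [measureReal_def, mu01_Icc_subset _ _ (eN_bounds N i).1 (eN_bounds N i).2]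
    have : ((i:ℝ)+1)/N - (i:ℝ)/N = (N:ℝ)⁻¹ := by field_simp; ring
    rw [this, ENNReal.toReal_ofReal (by positivity)]
    rw [Complex.real_smul, if_pos trivial,
      show ((Real.sqrt N:ℝ):ℂ) * ((((N:ℝ)⁻¹:ℝ):ℂ) * ((Real.sqrt N:ℝ):ℂ))
        = (((Real.sqrt N * Real.sqrt N : ℝ):ℂ)) * (((N:ℝ):ℂ))⁻¹ from by push_cast; ring,
      Real.mul_self_sqrt hN.le, mul_inv_cancel₀ (by exact_mod_cast hN.ne')]
  · rw [if_neg hij]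
    have hzero : μ01 (Set.Icc ((i:ℝ)/N) (((i:ℝ)+1)/N) ∩ Set.Icc ((j:ℝ)/N) (((j:ℝ)+1)/N)) = 0 := by
      rw [Set.Icc_inter_Icc]
      have hba : min (((i:ℝ)+1)/N) (((j:ℝ)+1)/N) ≤ max ((i:ℝ)/N) ((j:ℝ)/N) := by
        rcases lt_or_gt_of_ne hij with h | h
        · have h1 : (i:ℝ) + 1 ≤ (j:ℝ) := by exact_mod_cast Nat.succ_le_of_lt h
          calc min (((i:ℝ)+1)/N) (((j:ℝ)+1)/N) ≤ ((i:ℝ)+1)/N := min_le_left _ _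
            _ ≤ (j:ℝ)/N := by gcongr
            _ ≤ max ((i:ℝ)/N) ((j:ℝ)/N) := le_max_right _ _
        · have h1 : (j:ℝ) + 1 ≤ (i:ℝ) := by exact_mod_cast Nat.succ_le_of_lt h
          calc min (((i:ℝ)+1)/N) (((j:ℝ)+1)/N) ≤ ((j:ℝ)+1)/N := min_le_right _ _
            _ ≤ (i:ℝ)/N := by gcongr
            _ ≤ max ((i:ℝ)/N) ((j:ℝ)/N) := le_max_left _ _
      refine le_antisymm ?_ (zero_le)
      calc μ01 (Set.Icc (max ((i:ℝ)/N) ((j:ℝ)/N)) (min (((i:ℝ)+1)/N) (((j:ℝ)+1)/N)))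
          ≤ volume (Set.Icc (max ((i:ℝ)/N) ((j:ℝ)/N)) (min (((i:ℝ)+1)/N) (((j:ℝ)+1)/N))) :=
            Measure.restrict_le_self _
        _ = ENNReal.ofReal (min (((i:ℝ)+1)/N) (((j:ℝ)+1)/N) - max ((i:ℝ)/N) ((j:ℝ)/N)) :=
            Real.volume_Icc
        _ ≤ 0 := by rw [ENNReal.ofReal_eq_zero.mpr (by linarith)]
    rw [measureReal_def, hzero]
    simp


lemma inner_expand (N : ℕ) (M : Matrix (Fin N) (Fin N) ℂ) (u v : Lp ℂ 2 μ01) :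
    (@inner ℂ _ _ v (Wmap N (matVec M (Wstar N u))) : ℂ)
      = ∑ i : Fin N, ∑ j : Fin N,
          M i j * (@inner ℂ _ _ (eN N j) u) * (@inner ℂ _ _ v (eN N i)) := by
  rw [Wmap, inner_sum]
  refine Finset.sum_congr rfl fun i _ => ?_
  rw [inner_smul_right, matVec, Matrix.toEuclideanLin_apply]
  have : (WithLp.equiv 2 (Fin N → ℂ)).symm (Matrix.mulVec M ((WithLp.equiv 2 (Fin N → ℂ)) (Wstar N u))) i
      = ∑ j, M i j * (@inner ℂ _ _ (eN N j) u) := by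
    simp [Wstar, Matrix.mulVec, dotProduct, mul_comm]
  rw [show (WithLp.toLp 2 (M.mulVec (Wstar N u).ofLp)).ofLp i = _ from this, Finset.sum_mul]

lemma bdd_integrable {Ω : Type*} [MeasureSpace Ω] [IsFiniteMeasure (ℙ : Measure Ω)]
    {f : Ω → ℝ} (hf : Measurable f) {C : ℝ} (h : ∀ ω, |f ω| ≤ C) : Integrable f ℙ :=
  ⟨hf.aestronglyMeasurable, HasFiniteIntegral.of_bounded (ae_of_all _ h)⟩

lemma norm_sq_complex (z : ℂ) : ‖z‖^2 = z.re^2 + z.im^2 := by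
  rw [Complex.sq_norm, Complex.normSq_apply]; ring

lemma integrable_sq_sum {Ω : Type*} [MeasureSpace Ω]
    {ι : Type*} [Fintype ι] (Y : ι → Ω → ℝ) (a : ι → ℝ)
    (hInt : ∀ p q : ι, Integrable (fun ω => Y p ω * Y q ω) ℙ) :
    Integrable (fun ω => (∑ p : ι, a p * Y p ω)^2) ℙ := by
  have hexp : ∀ ω, (∑ p : ι, a p * Y p ω)^2
      = ∑ p : ι, ∑ q : ι, (a p * a q) * (Y p ω * Y q ω) := by
    intro ω; rw [sq, Finset.sum_mul_sum]
    refine Finset.sum_congr rfl fun p _ => Finset.sum_congr rfl fun q _ => by ring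
  simp_rw [hexp]
  exact integrable_finset_sum _ fun p _ =>
    integrable_finset_sum _ fun q _ => (hInt p q).const_mul _

lemma sum_sq_integral_le {Ω : Type*} [MeasureSpace Ω] [IsProbabilityMeasure (ℙ : Measure Ω)]
    {ι : Type*} [Fintype ι] (Y : ι → Ω → ℝ) (a : ι → ℝ) (K : ℝ)
    (hInt : ∀ p q : ι, Integrable (fun ω => Y p ω * Y q ω) ℙ)
    (hcross : ∀ p q : ι, p ≠ q → ∫ ω, Y p ω * Y q ω ∂ℙ = 0)
    (hvar : ∀ p : ι, ∫ ω, Y p ω * Y p ω ∂ℙ ≤ K) :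
    ∫ ω, (∑ p : ι, a p * Y p ω)^2 ∂ℙ ≤ K * ∑ p : ι, (a p)^2 := by
  have hexp : ∀ ω, (∑ p : ι, a p * Y p ω)^2
      = ∑ p : ι, ∑ q : ι, (a p * a q) * (Y p ω * Y q ω) := by
    intro ω; rw [sq, Finset.sum_mul_sum]
    refine Finset.sum_congr rfl fun p _ => Finset.sum_congr rfl fun q _ => by ring
  simp_rw [hexp]
  rw [integral_finset_sum _ (fun p _ =>
    integrable_finset_sum _ (fun q _ => (hInt p q).const_mul _))]
  have hrow : ∀ p : ι, ∫ ω, ∑ q : ι, (a p * a q) * (Y p ω * Y q ω) ∂ℙ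
      = (a p * a p) * ∫ ω, Y p ω * Y p ω ∂ℙ := by
    intro p
    rw [integral_finset_sum _ (fun q _ => (hInt p q).const_mul _)]
    rw [Finset.sum_eq_single p]
    · rw [integral_const_mul]
    · intro q _ hq
      rw [integral_const_mul, hcross p q (fun h => hq h.symm), mul_zero]
    · intro h; exact absurd (Finset.mem_univ p) h
  simp_rw [hrow]
  calc ∑ p : ι, (a p * a p) * ∫ ω, Y p ω * Y p ω ∂ℙ
      ≤ ∑ p : ι, (a p)^2 * K := by
        refine Finset.sum_le_sum fun p _ => ?_
        rw [← sq]
        exact mul_le_mul_of_nonneg_left (hvar p) (sq_nonneg _)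
    _ = K * ∑ p : ι, (a p)^2 := by rw [← Finset.sum_mul, mul_comm]

lemma prob_part {Ω : Type*} [MeasureSpace Ω] [IsProbabilityMeasure (ℙ : Measure Ω)]
    (X : (N : ℕ) → Fin N → Fin N → Ω → ℝ)
    (d : ℝ) (hd0 : 0 < d) (hd1 : d < 1)
    (hmeas : ∀ N (i j : Fin N), Measurable (X N i j))
    (hzero : ∀ N (i j : Fin N), i < j → ∀ ω, X N i j ω = 0)
    (hindep : ∀ N, iIndepFun
      (fun p : LTri N => X N p.1.1 p.1.2) ℙ)
    (hvals : ∀ N (i j : Fin N), j ≤ i → ∀ ω,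
      X N i j ω = (N : ℝ) ^ d ∨ X N i j ω = 0)
    (hprob : ∀ N (i j : Fin N), j ≤ i →
      ℙ {ω | X N i j ω = (N : ℝ) ^ d} = ENNReal.ofReal ((N : ℝ) ^ (-d)))
    (c : (N : ℕ) → Fin N → Fin N → ℂ) (C : ℝ)
    (hc : ∀ N : ℕ, ∑ i : Fin N, ∑ j : Fin N, ‖c N i j‖^2 ≤ C * (((N:ℝ)^2)⁻¹)) :
    ∀ᵐ ω ∂ℙ, Tendsto
      (fun N => ∑ i : Fin N, ∑ j : Fin N,
        ((X N i j ω : ℂ) - if j ≤ i then 1 else 0) * c N i j)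
      atTop (nhds 0) := by
  classical
  have hC : 0 ≤ C := by
    have h1 := hc 1
    have h2 : (0:ℝ) ≤ ∑ i : Fin 1, ∑ j : Fin 1, ‖c 1 i j‖^2 :=
      Finset.sum_nonneg fun i _ => Finset.sum_nonneg fun j _ => sq_nonneg _
    nlinarith
  -- the centered variables
  set Y : (N : ℕ) → Fin N × Fin N → Ω → ℝ :=
    fun N p ω => X N p.1 p.2 ω - (if p.2 ≤ p.1 then 1 else 0) with hY
  -- basic facts about the entries
  have hNpos : ∀ {N : ℕ}, Fin N → (0:ℝ) < N := fun {N} i => by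
    exact_mod_cast Nat.pos_of_ne_zero (by rintro rfl; exact i.elim0)
  have hind : ∀ N (i j : Fin N), j ≤ i →
      X N i j = Set.indicator {ω | X N i j ω = (N:ℝ)^d} (fun _ => (N:ℝ)^d) := by
    intro N i j hij
    funext ω
    rw [Set.indicator_apply]
    split_ifs with h
    · exact h
    · exact (hvals N i j hij ω).resolve_left h
  have hXint : ∀ N (i j : Fin N), Integrable (X N i j) ℙ := by
    intro N i j
    refine bdd_integrable (hmeas N i j) (C := (N:ℝ)^d) fun ω => ?_
    rcases le_or_gt j i with h | h
    · rcases hvals N i j h ω with h' | h' <;> rw [h'] <;>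
        simp [abs_of_nonneg, Real.rpow_nonneg (Nat.cast_nonneg N), le_abs_self,
          abs_of_nonneg (Real.rpow_nonneg (Nat.cast_nonneg N) d)]
    · rw [hzero N i j h ω]
      simpa using Real.rpow_nonneg (Nat.cast_nonneg N) d
  have hXexp : ∀ N (i j : Fin N), j ≤ i → ∫ ω, X N i j ω ∂ℙ = 1 := by
    intro N i j hij
    have hA : MeasurableSet {ω | X N i j ω = (N:ℝ)^d} :=
      (hmeas N i j) (measurableSet_singleton _)
    rw [show (fun ω => X N i j ω) = X N i j from rfl, hind N i j hij,
      integral_indicator_const _ hA, measureReal_def, hprob N i j hij,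
      ENNReal.toReal_ofReal (Real.rpow_nonneg (Nat.cast_nonneg N) _), smul_eq_mul,
      ← Real.rpow_add (hNpos i), neg_add_cancel, Real.rpow_zero]
  have hXsqexp : ∀ N (i j : Fin N), j ≤ i →
      ∫ ω, X N i j ω * X N i j ω ∂ℙ = (N:ℝ)^d := by
    intro N i j hij
    have hA : MeasurableSet {ω | X N i j ω = (N:ℝ)^d} :=
      (hmeas N i j) (measurableSet_singleton _)
    have heq : (fun ω => X N i j ω * X N i j ω)
        = Set.indicator {ω | X N i j ω = (N:ℝ)^d} (fun _ => (N:ℝ)^d * (N:ℝ)^d) := by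
      funext ω
      rw [Set.indicator_apply]
      split_ifs with h
      · rw [show X N i j ω = (N:ℝ)^d from h]
      · rw [(hvals N i j hij ω).resolve_left h, mul_zero]
    rw [heq, integral_indicator_const _ hA, measureReal_def, hprob N i j hij,
      ENNReal.toReal_ofReal (Real.rpow_nonneg (Nat.cast_nonneg N) _), smul_eq_mul,
      ← Real.rpow_add (hNpos i), ← Real.rpow_add (hNpos i),
      show -d + (d + d) = d by ring]
  -- bound on |X|
  have hXbd : ∀ N (i j : Fin N) ω, |X N i j ω| ≤ (N:ℝ)^d := by
    intro N i j ω
    have h0 : (0:ℝ) ≤ (N:ℝ)^d := Real.rpow_nonneg (Nat.cast_nonneg N) d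
    have hX : X N i j ω = (N:ℝ)^d ∨ X N i j ω = 0 := by
      rcases le_or_gt j i with h | h
      · exact hvals N i j h ω
      · exact Or.inr (hzero N i j h ω)
    rcases hX with h | h <;> rw [h] <;> simp [abs_of_nonneg h0, h0]
  -- facts about Y
  have hYmeas : ∀ N (p : Fin N × Fin N), Measurable (Y N p) :=
    fun N p => (hmeas N p.1 p.2).sub measurable_const
  have hYbd : ∀ N (p : Fin N × Fin N) ω, |Y N p ω| ≤ (N:ℝ)^d + 1 := by
    intro N p ω
    have h0 : (0:ℝ) ≤ (N:ℝ)^d := Real.rpow_nonneg (Nat.cast_nonneg N) d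
    have hb := hXbd N p.1 p.2 ω
    simp only [hY]
    split_ifs <;> rw [abs_le] <;> rw [abs_le] at hb <;> constructor <;> linarith
  have hYint : ∀ N (p : Fin N × Fin N), Integrable (Y N p) ℙ :=
    fun N p => bdd_integrable (hYmeas N p) (hYbd N p)
  have hYint2 : ∀ N (p q : Fin N × Fin N), Integrable (fun ω => Y N p ω * Y N q ω) ℙ := by
    intro N p q
    have h1 : (0:ℝ) ≤ (N:ℝ)^d + 1 := by positivity
    refine bdd_integrable ((hYmeas N p).mul (hYmeas N q))
      (C := ((N:ℝ)^d + 1) * ((N:ℝ)^d + 1)) fun ω => ?_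
    rw [abs_mul]
    exact mul_le_mul (hYbd N p ω) (hYbd N q ω) (abs_nonneg _) h1
  have hYzero : ∀ N (p : Fin N × Fin N), p.1 < p.2 → Y N p = fun _ => 0 := by
    intro N p hp
    funext ω
    simp [hY, hzero N p.1 p.2 hp ω, if_neg (not_le.mpr hp)]
  have hYexp : ∀ N (p : Fin N × Fin N), ∫ ω, Y N p ω ∂ℙ = 0 := by
    intro N p
    rcases le_or_gt p.2 p.1 with h | h
    · have he : (fun ω => Y N p ω) = fun ω => X N p.1 p.2 ω - 1 := by
        funext ω; simp [hY, if_pos h]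
      rw [he, integral_sub (hXint N p.1 p.2) (integrable_const 1), hXexp N p.1 p.2 h]
      simp
    · rw [show (fun ω => Y N p ω) = fun _ => (0:ℝ) from hYzero N p h, integral_zero]
  have hXXint : ∀ N (i j : Fin N), Integrable (fun ω => X N i j ω * X N i j ω) ℙ := by
    intro N i j
    have h0 : (0:ℝ) ≤ (N:ℝ)^d := Real.rpow_nonneg (Nat.cast_nonneg N) d
    refine bdd_integrable ((hmeas N i j).mul (hmeas N i j)) (C := (N:ℝ)^d * (N:ℝ)^d) fun ω => ?_
    rw [abs_mul]
    exact mul_le_mul (hXbd N i j ω) (hXbd N i j ω) (abs_nonneg _) h0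
  have hYvar : ∀ N (p : Fin N × Fin N), ∫ ω, Y N p ω * Y N p ω ∂ℙ ≤ (N:ℝ)^d := by
    intro N p
    have h0 : (0:ℝ) ≤ (N:ℝ)^d := Real.rpow_nonneg (Nat.cast_nonneg N) d
    rcases le_or_gt p.2 p.1 with h | h
    · have hfe : (fun ω => Y N p ω * Y N p ω)
          = fun ω => (X N p.1 p.2 ω * X N p.1 p.2 ω - 2 * X N p.1 p.2 ω) + 1 := by
        funext ω; simp only [hY, if_pos h]; ring
      rw [hfe, integral_add (show Integrable
            (fun ω => X N p.1 p.2 ω * X N p.1 p.2 ω - 2 * X N p.1 p.2 ω) ℙ from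
            (hXXint N p.1 p.2).sub ((hXint N p.1 p.2).const_mul 2))
          (integrable_const 1),
        integral_sub (hXXint N p.1 p.2) (show Integrable
            (fun ω => 2 * X N p.1 p.2 ω) ℙ from (hXint N p.1 p.2).const_mul 2),
        integral_const_mul, hXsqexp N p.1 p.2 h, hXexp N p.1 p.2 h, integral_const]
      simp only [measure_univ, ENNReal.toReal_one, probReal_univ, smul_eq_mul, one_mul, mul_one]
      linarith
    · rw [show (fun ω => Y N p ω * Y N p ω) = fun _ => (0:ℝ) from by
        rw [hYzero N p h]; funext ω; simp, integral_zero]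
      exact h0
  have hcross : ∀ N (p q : Fin N × Fin N), p ≠ q → ∫ ω, Y N p ω * Y N q ω ∂ℙ = 0 := by
    intro N p q hpq
    rcases le_or_gt p.2 p.1 with hp | hp
    · rcases le_or_gt q.2 q.1 with hq | hq
      · -- both lower triangular: use independence
        have hne : (⟨p, hp⟩ : LTri N) ≠ ⟨q, hq⟩ :=
          fun h => hpq (congrArg (fun x : LTri N => x.1) h)
        have hIF : IndepFun (X N p.1 p.2) (X N q.1 q.2) ℙ := (hindep N).indepFun hne
        have hm : Measurable (fun x : ℝ => x - 1) := measurable_id.sub measurable_const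
        have hIF2 := hIF.comp hm hm
        have e1 : (fun x : ℝ => x - 1) ∘ (X N p.1 p.2) = Y N p := by
          funext ω; simp [hY, Function.comp, if_pos hp]
        have e2 : (fun x : ℝ => x - 1) ∘ (X N q.1 q.2) = Y N q := by
          funext ω; simp [hY, Function.comp, if_pos hq]
        rw [e1, e2] at hIF2
        have h3 : ∫ ω, Y N p ω * Y N q ω ∂ℙ = (∫ ω, Y N p ω ∂ℙ) * ∫ ω, Y N q ω ∂ℙ :=
          IndepFun.integral_fun_mul_eq_mul_integral hIF2 (hYint N p).1 (hYint N q).1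
        rw [h3, hYexp, zero_mul]
      · rw [show (fun ω => Y N p ω * Y N q ω) = fun _ => (0:ℝ) from by
          rw [hYzero N q hq]; funext ω; simp, integral_zero]
    · rw [show (fun ω => Y N p ω * Y N q ω) = fun _ => (0:ℝ) from by
        rw [hYzero N p hp]; funext ω; simp, integral_zero]
  -- the error sums
  set E : (N : ℕ) → Ω → ℂ := fun N ω => ∑ i : Fin N, ∑ j : Fin N,
      ((X N i j ω : ℂ) - if j ≤ i then 1 else 0) * c N i j with hE
  have hEeq : ∀ N ω, E N ω = ∑ p : Fin N × Fin N, ((Y N p ω : ℝ) : ℂ) * c N p.1 p.2 := by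
    intro N ω
    simp only [hE]
    rw [Fintype.sum_prod_type]
    refine Finset.sum_congr rfl fun i _ => Finset.sum_congr rfl fun j _ => ?_
    simp only [hY]
    push_cast [apply_ite (fun r : ℝ => (r : ℂ))]
    ring
  have hre : ∀ N ω, (E N ω).re = ∑ p : Fin N × Fin N, (c N p.1 p.2).re * Y N p ω := by
    intro N ω
    rw [hEeq, Complex.re_sum]
    refine Finset.sum_congr rfl fun p _ => ?_
    rw [Complex.re_ofReal_mul]; ring
  have him : ∀ N ω, (E N ω).im = ∑ p : Fin N × Fin N, (c N p.1 p.2).im * Y N p ω := by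
    intro N ω
    rw [hEeq, Complex.im_sum]
    refine Finset.sum_congr rfl fun p _ => ?_
    rw [Complex.im_ofReal_mul]; ring
  have h1 : ∀ N ω, ‖E N ω‖^2 = (∑ p : Fin N × Fin N, (c N p.1 p.2).re * Y N p ω)^2
      + (∑ p : Fin N × Fin N, (c N p.1 p.2).im * Y N p ω)^2 := by
    intro N ω
    rw [norm_sq_complex, hre, him]
  have hEint : ∀ N, Integrable (fun ω => ‖E N ω‖^2) ℙ := by
    intro N
    have h2 := (show Integrable
        (fun ω => (∑ p : Fin N × Fin N, (c N p.1 p.2).re * Y N p ω)^2) ℙ from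
        integrable_sq_sum (Y N) _ (hYint2 N)).add
      (show Integrable
        (fun ω => (∑ p : Fin N × Fin N, (c N p.1 p.2).im * Y N p ω)^2) ℙ from
        integrable_sq_sum (Y N) _ (hYint2 N))
    refine h2.congr (ae_of_all _ fun ω => ?_)
    simp only [Pi.add_apply]
    exact (h1 N ω).symm
  have hEkey : ∀ N, ∫ ω, ‖E N ω‖^2 ∂ℙ ≤ (N:ℝ)^d * (C * (((N:ℝ)^2)⁻¹)) := by
    intro N
    have h0 : (0:ℝ) ≤ (N:ℝ)^d := Real.rpow_nonneg (Nat.cast_nonneg N) d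
    simp_rw [h1 N]
    rw [integral_add (show Integrable
        (fun ω => (∑ p : Fin N × Fin N, (c N p.1 p.2).re * Y N p ω)^2) ℙ from
        integrable_sq_sum (Y N) _ (hYint2 N))
      (show Integrable
        (fun ω => (∑ p : Fin N × Fin N, (c N p.1 p.2).im * Y N p ω)^2) ℙ from
        integrable_sq_sum (Y N) _ (hYint2 N))]
    have hb1 := sum_sq_integral_le (Y N) (fun p => (c N p.1 p.2).re) ((N:ℝ)^d)
      (hYint2 N) (hcross N) (hYvar N)
    have hb2 := sum_sq_integral_le (Y N) (fun p => (c N p.1 p.2).im) ((N:ℝ)^d)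
      (hYint2 N) (hcross N) (hYvar N)
    have hsum : (∑ p : Fin N × Fin N, ((c N p.1 p.2).re)^2)
        + (∑ p : Fin N × Fin N, ((c N p.1 p.2).im)^2) ≤ C * (((N:ℝ)^2)⁻¹) := by
      rw [← Finset.sum_add_distrib]
      calc ∑ p : Fin N × Fin N, (((c N p.1 p.2).re)^2 + ((c N p.1 p.2).im)^2)
          = ∑ p : Fin N × Fin N, ‖c N p.1 p.2‖^2 :=
            Finset.sum_congr rfl fun p _ => (norm_sq_complex _).symm
        _ = ∑ i : Fin N, ∑ j : Fin N, ‖c N i j‖^2 := by rw [Fintype.sum_prod_type]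
        _ ≤ C * (((N:ℝ)^2)⁻¹) := hc N
    calc ∫ ω, (∑ p : Fin N × Fin N, (c N p.1 p.2).re * Y N p ω)^2 ∂ℙ
          + ∫ ω, (∑ p : Fin N × Fin N, (c N p.1 p.2).im * Y N p ω)^2 ∂ℙ
        ≤ (N:ℝ)^d * (∑ p : Fin N × Fin N, ((c N p.1 p.2).re)^2)
          + (N:ℝ)^d * (∑ p : Fin N × Fin N, ((c N p.1 p.2).im)^2) := add_le_add hb1 hb2
      _ = (N:ℝ)^d * ((∑ p : Fin N × Fin N, ((c N p.1 p.2).re)^2)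
          + (∑ p : Fin N × Fin N, ((c N p.1 p.2).im)^2)) := by ring
      _ ≤ (N:ℝ)^d * (C * (((N:ℝ)^2)⁻¹)) := mul_le_mul_of_nonneg_left hsum h0
  -- measurability
  have hEmeas : ∀ N, Measurable (fun ω => ‖E N ω‖^2) := by
    intro N
    have hm : Measurable (E N) := by
      simp only [hE]
      exact Finset.measurable_sum _ fun i _ => Finset.measurable_sum _ fun j _ =>
        (((Complex.measurable_ofReal.comp (hmeas N i j)).sub measurable_const).mul
          measurable_const)
    exact hm.norm.pow_const 2
  -- arithmetic bound
  have harith : ∀ N : ℕ, (N:ℝ)^d * (C * (((N:ℝ)^2)⁻¹)) ≤ C * (N:ℝ)^(d-2) := by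
    intro N
    rcases Nat.eq_zero_or_pos N with rfl | hN
    · simp [Real.zero_rpow hd0.ne', Real.zero_rpow (show d - 2 ≠ 0 by linarith)]
    · have hN0 : (0:ℝ) < N := by exact_mod_cast hN
      rw [Real.rpow_sub hN0, show ((2:ℝ)) = ((2:ℕ):ℝ) by norm_num, Real.rpow_natCast]
      rw [div_eq_mul_inv]
      apply le_of_eq
      ring
  have hsummable : Summable (fun N : ℕ => C * (N:ℝ)^(d-2)) :=
    (Real.summable_nat_rpow.mpr (by linarith)).mul_left C
  have hnn : ∀ N : ℕ, 0 ≤ C * (N:ℝ)^(d-2) :=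
    fun N => mul_nonneg hC (Real.rpow_nonneg (Nat.cast_nonneg N) _)
  have htsum : ∑' N : ℕ, ENNReal.ofReal (C * (N:ℝ)^(d-2)) ≠ ⊤ := by
    rw [← ENNReal.ofReal_tsum_of_nonneg hnn hsummable]
    exact ENNReal.ofReal_ne_top
  have hlint : ∀ N, ∫⁻ ω, ENNReal.ofReal (‖E N ω‖^2) ∂ℙ
      ≤ ENNReal.ofReal (C * (N:ℝ)^(d-2)) := by
    intro N
    rw [← ofReal_integral_eq_lintegral_ofReal (hEint N) (ae_of_all _ fun ω => sq_nonneg _)]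
    exact ENNReal.ofReal_le_ofReal ((hEkey N).trans (harith N))
  have hfin : ∫⁻ ω, ∑' N, ENNReal.ofReal (‖E N ω‖^2) ∂ℙ ≠ ⊤ := by
    rw [lintegral_tsum (fun N => ((hEmeas N).ennreal_ofReal).aemeasurable)]
    exact ne_top_of_le_ne_top htsum (ENNReal.tsum_le_tsum hlint)
  have hae := ae_lt_top (Measurable.ennreal_tsum fun N => (hEmeas N).ennreal_ofReal) hfin
  filter_upwards [hae] with ω hω
  have ht1 : Tendsto (fun N => ENNReal.ofReal (‖E N ω‖^2)) atTop (nhds 0) :=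
    ENNReal.tendsto_atTop_zero_of_tsum_ne_top hω.ne
  have ht2 : Tendsto (fun N => ‖E N ω‖^2) atTop (nhds 0) := by
    have h3 := (ENNReal.tendsto_toReal (by simp : (0:ENNReal) ≠ ⊤)).comp ht1
    simpa [Function.comp_def, ENNReal.toReal_ofReal (sq_nonneg _)] using h3
  have ht4 : Tendsto (fun N => ‖E N ω‖) atTop (nhds 0) := by
    have h5 := (Real.continuous_sqrt.tendsto 0).comp ht2
    simpa [Function.comp_def, Real.sqrt_sq (norm_nonneg _)] using h5
  exact tendsto_zero_iff_norm_tendsto_zero.mpr ht4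


instance : NullSingletonClass μ01 := by
  unfold μ01; infer_instance


lemma minmax (N : ℕ) (i j : Fin N) (hij : i ≠ j) :
    min (((i:ℝ)+1)/N) (((j:ℝ)+1)/N) ≤ max ((i:ℝ)/N) ((j:ℝ)/N) := by
  have hN : (0:ℝ) < N := by exact_mod_cast Nat.pos_of_ne_zero (by rintro rfl; exact i.elim0)
  rcases lt_or_gt_of_ne hij with h | h
  · have h1 : (i:ℝ) + 1 ≤ (j:ℝ) := by exact_mod_cast Nat.succ_le_of_lt h
    calc min (((i:ℝ)+1)/N) (((j:ℝ)+1)/N) ≤ ((i:ℝ)+1)/N := min_le_left _ _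
      _ ≤ (j:ℝ)/N := by gcongr
      _ ≤ max ((i:ℝ)/N) ((j:ℝ)/N) := le_max_right _ _
  · have h1 : (j:ℝ) + 1 ≤ (i:ℝ) := by exact_mod_cast Nat.succ_le_of_lt h
    calc min (((i:ℝ)+1)/N) (((j:ℝ)+1)/N) ≤ ((j:ℝ)+1)/N := min_le_right _ _
      _ ≤ (i:ℝ)/N := by gcongr
      _ ≤ max ((i:ℝ)/N) ((j:ℝ)/N) := le_max_left _ _

lemma hUnion (N : ℕ) (hN : 0 < N) :
    (⋃ i : Fin N, Set.Ioc ((i:ℝ)/N) (((i:ℝ)+1)/N)) = Set.Ioc (0:ℝ) 1 := by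
  have hNR : (0:ℝ) < N := by exact_mod_cast hN
  ext x
  simp only [Set.mem_iUnion, Set.mem_Ioc]
  constructor
  · rintro ⟨i, h1, h2⟩
    have hb := (eN_bounds N i).1
    have hb2 := (eN_bounds N i).2
    exact ⟨lt_of_le_of_lt hb h1, le_trans h2 hb2⟩
  · rintro ⟨hx0, hx1⟩
    set n : ℕ := ⌈(N:ℝ) * x⌉₊ with hn
    have hx0' : 0 < (N:ℝ) * x := by positivity
    have hn1 : 1 ≤ n := by
      rw [hn]
      exact Nat.one_le_ceil_iff.mpr hx0'
    have hnN : n ≤ N := by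
      rw [hn]
      refine Nat.ceil_le.mpr ?_
      calc (N:ℝ) * x ≤ (N:ℝ) * 1 := by gcongr
        _ = ((N:ℕ):ℝ) := mul_one _
    refine ⟨⟨n - 1, by omega⟩, ?_, ?_⟩
    · -- (n-1)/N < x
      have h2 : (n:ℝ) < (N:ℝ) * x + 1 := by
        rw [hn]
        exact Nat.ceil_lt_add_one (le_of_lt hx0')
      have hcast : ((n - 1 : ℕ) : ℝ) = (n:ℝ) - 1 := by
        have : (1:ℕ) ≤ n := hn1
        push_cast [Nat.cast_sub this]
        ring
      show (((n - 1 : ℕ) : ℝ)) / N < x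
      rw [hcast, div_lt_iff₀ hNR]
      linarith [mul_comm (N:ℝ) x]
    · -- x ≤ n/N
      have h3 : (N:ℝ) * x ≤ (n:ℝ) := by
        rw [hn]; exact Nat.le_ceil _
      have hcast : ((n - 1 : ℕ) : ℝ) + 1 = (n:ℝ) := by
        have : (1:ℕ) ≤ n := hn1
        push_cast [Nat.cast_sub this]
        ring
      show x ≤ (((n - 1 : ℕ) : ℝ) + 1) / N
      rw [hcast, le_div_iff₀ hNR]
      linarith [mul_comm (N:ℝ) x]

lemma hsplit {E : Type*} [NormedAddCommGroup E] [NormedSpace ℝ E]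
    (f : ℝ → E) (hf : Integrable f μ01) (N : ℕ) (hN : 0 < N) :
    ∫ x, f x ∂μ01 = ∑ i : Fin N, ∫ x in Set.Ioc ((i:ℝ)/N) (((i:ℝ)+1)/N), f x ∂μ01 := by
  have hpair : Pairwise (Function.onFun Disjoint
      (fun i : Fin N => Set.Ioc ((i:ℝ)/N) (((i:ℝ)+1)/N))) := by
    intro i j hij
    exact Set.Ioc_disjoint_Ioc.mpr (minmax N i j hij)
  rw [← integral_iUnion_fintype (fun i => measurableSet_Ioc) hpair
    (fun i => hf.integrableOn), hUnion N hN]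
  have hae : ∀ᵐ x ∂μ01, x ∈ Set.Ioc (0:ℝ) 1 := by
    rw [ae_iff]
    have hset : {x : ℝ | ¬ x ∈ Set.Ioc (0:ℝ) 1} = (Set.Ioc (0:ℝ) 1)ᶜ := rfl
    rw [hset, show μ01 = volume.restrict (Set.Icc 0 1) from rfl,
      Measure.restrict_apply measurableSet_Ioc.compl]
    refine measure_mono_null (fun x hx => ?_) (measure_singleton (0:ℝ))
    rcases hx with ⟨hc, hicc⟩
    simp only [Set.mem_compl_iff, Set.mem_Ioc, not_and_or, not_lt, not_le] at hc
    rcases hicc with ⟨h0, h1⟩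
    rcases hc with h | h
    · exact le_antisymm h h0
    · linarith
  rw [Measure.restrict_eq_self_of_ae_mem hae]

lemma det_part (V : Lp ℂ 2 μ01 → Lp ℂ 2 μ01) (hV : IsVolterra V) (u v : Lp ℂ 2 μ01) :
    Tendsto (fun N : ℕ => ∑ i : Fin N, ∑ j : Fin N,
        (if j ≤ i then (1:ℂ) else 0)
          * ((N:ℂ)⁻¹ * (@inner ℂ _ _ (eN N j) u) * (@inner ℂ _ _ v (eN N i))))
      atTop (nhds (@inner ℂ _ _ v (V u))) := by
  classical
  set F : ℝ → ℂ := fun x => ∫ t in (0:ℝ)..x, (u : ℝ → ℂ) t with hF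
  have huI : Integrable (u : ℝ → ℂ) μ01 := (Lp.memLp u).integrable (by norm_num)
  have hvI : Integrable (v : ℝ → ℂ) μ01 := (Lp.memLp v).integrable (by norm_num)
  have huIcc : IntegrableOn (u : ℝ → ℂ) (Set.Icc 0 1) volume := huI
  have huInt : ∀ a b : ℝ, 0 ≤ a → 0 ≤ b → a ≤ 1 → b ≤ 1 →
      IntervalIntegrable (u : ℝ → ℂ) volume a b := by
    intro a b ha0 hb0 ha1 hb1
    rw [intervalIntegrable_iff]
    refine huIcc.mono_set fun x hx => ?_
    rcases hx with ⟨h1, h2⟩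
    exact ⟨le_of_lt (lt_of_le_of_lt (le_min ha0 hb0) h1), le_trans h2 (max_le ha1 hb1)⟩
  have setInt : ∀ (f : ℝ → ℂ) (a b : ℝ), 0 ≤ a → a ≤ b → b ≤ 1 →
      ∫ x in Set.Icc a b, f x ∂μ01 = ∫ x in a..b, f x := by
    intro f a b h0 hab h1
    rw [show μ01 = volume.restrict (Set.Icc 0 1) from rfl,
      Measure.restrict_restrict measurableSet_Icc,
      Set.inter_eq_left.mpr (Set.Icc_subset_Icc h0 h1),
      intervalIntegral.integral_of_le hab]
    exact integral_Icc_eq_integral_Ioc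
  have hFd : ∀ a b : ℝ, 0 ≤ a → a ≤ b → b ≤ 1 →
      F b - F a = ∫ x in Set.Icc a b, (u : ℝ → ℂ) x ∂μ01 := by
    intro a b h0 hab h1
    rw [setInt _ a b h0 hab h1]
    simp only [hF]
    exact intervalIntegral.integral_interval_sub_left
      (huInt 0 b le_rfl (le_trans h0 hab) zero_le_one h1)
      (huInt 0 a le_rfl h0 zero_le_one (le_trans hab h1))
  have hFbd : ∀ a b : ℝ, 0 ≤ a → a ≤ b → b ≤ 1 →
      ‖F b - F a‖ ≤ Real.sqrt (b - a) * ‖u‖ := by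
    intro a b h0 hab h1
    rw [hFd a b h0 hab h1]
    have hcs := cs_bound (Set.Icc a b) measurableSet_Icc u
    rwa [mu01_Icc_subset a b h0 h1, ENNReal.toReal_ofReal (by linarith)] at hcs
  have hF0 : F 0 = 0 := by rw [hF]; simp
  have sqrtNC : ∀ N : ℕ, ((Real.sqrt N : ℝ) : ℂ) * ((Real.sqrt N : ℝ) : ℂ) = (N:ℂ) := by
    intro N
    rw [← Complex.ofReal_mul, Real.mul_self_sqrt (Nat.cast_nonneg N)]
    norm_cast
  have hα : ∀ (N:ℕ) (j : Fin N), (@inner ℂ _ _ (eN N j) u)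
      = (Real.sqrt N : ℂ) * (F (((j:ℝ)+1)/N) - F ((j:ℝ)/N)) := by
    intro N j
    have hN : (0:ℝ) < N := by
      exact_mod_cast Nat.pos_of_ne_zero (by rintro rfl; exact j.elim0)
    have hj : (j:ℝ)/N ≤ ((j:ℝ)+1)/N := by gcongr; linarith
    rw [inner_eN, ← hFd _ _ (eN_bounds N j).1 hj (eN_bounds N j).2]
  have htel : ∀ (N:ℕ) (i : Fin N),
      (∑ j : Fin N, if j ≤ i then (F (((j:ℝ)+1)/N) - F ((j:ℝ)/N)) else 0)
        = F (((i:ℝ)+1)/N) := by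
    intro N i
    have h1 : ∀ j : Fin N, (if j ≤ i then (F (((j:ℝ)+1)/N) - F ((j:ℝ)/N)) else 0)
        = (if (j:ℕ) ≤ (i:ℕ) then (F (((j:ℝ)+1)/N) - F ((j:ℝ)/N)) else 0) :=
      fun j => if_congr Fin.le_def rfl rfl
    rw [Finset.sum_congr rfl (fun j _ => h1 j),
      Fin.sum_univ_eq_sum_range
        (fun m : ℕ => if m ≤ (i:ℕ) then (F (((m:ℝ)+1)/N) - F ((m:ℝ)/N)) else 0)]
    have hsub : Finset.range ((i:ℕ)+1) ⊆ Finset.range N := Finset.range_subset_range.mpr i.isLt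
    rw [← Finset.sum_subset hsub (fun m _ hnm => if_neg (fun hle =>
      hnm (Finset.mem_range.mpr (Nat.lt_succ_of_le hle)))),
      Finset.sum_congr rfl (fun m hm =>
        if_pos (Nat.lt_succ_iff.mp (Finset.mem_range.mp hm)))]
    have tel := Finset.sum_range_sub (fun m : ℕ => F ((m:ℝ)/N)) ((i:ℕ)+1)
    push_cast at tel
    rw [tel]
    norm_num [hF0]
  have hβ : ∀ (N:ℕ) (i : Fin N), (@inner ℂ _ _ v (eN N i))
      = (Real.sqrt N : ℂ) * (starRingEnd ℂ)
          (∫ x in Set.Icc ((i:ℝ)/N) (((i:ℝ)+1)/N), (v : ℝ → ℂ) x ∂μ01) := by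
    intro N i
    rw [← inner_conj_symm, inner_eN, RingHom.map_mul, Complex.conj_ofReal]
  -- the simplified form of the Riemann sums
  have hDN : ∀ N : ℕ, 0 < N →
      (∑ i : Fin N, ∑ j : Fin N, (if j ≤ i then (1:ℂ) else 0)
        * ((N:ℂ)⁻¹ * (@inner ℂ _ _ (eN N j) u) * (@inner ℂ _ _ v (eN N i))))
      = ∑ i : Fin N,
          (∫ x in Set.Icc ((i:ℝ)/N) (((i:ℝ)+1)/N),
            (starRingEnd ℂ) ((v : ℝ → ℂ) x) ∂μ01) * F (((i:ℝ)+1)/N) := by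
    intro N hN
    have hNC : ((N:ℕ):ℂ) ≠ 0 := by
      exact_mod_cast Nat.cast_ne_zero.mpr hN.ne'
    refine Finset.sum_congr rfl fun i _ => ?_
    have step1 : ∀ j : Fin N, (if j ≤ i then (1:ℂ) else 0)
        * ((N:ℂ)⁻¹ * (@inner ℂ _ _ (eN N j) u) * (@inner ℂ _ _ v (eN N i)))
        = ((N:ℂ)⁻¹ * (@inner ℂ _ _ v (eN N i)) * (Real.sqrt N : ℂ))
          * (if j ≤ i then (F (((j:ℝ)+1)/N) - F ((j:ℝ)/N)) else 0) := by
      intro j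
      rw [hα N j]
      split_ifs <;> ring
    rw [Finset.sum_congr rfl (fun j _ => step1 j), ← Finset.mul_sum, htel N i, hβ N i]
    rw [integral_conj]
    have : (N:ℂ)⁻¹ * ((Real.sqrt N : ℂ) * (starRingEnd ℂ)
          (∫ x in Set.Icc ((i:ℝ)/N) (((i:ℝ)+1)/N), (v : ℝ → ℂ) x ∂μ01))
        * (Real.sqrt N : ℂ) * F (((i:ℝ)+1)/N)
        = (((Real.sqrt N : ℝ):ℂ) * ((Real.sqrt N : ℝ):ℂ) * (N:ℂ)⁻¹)
          * ((starRingEnd ℂ)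
            (∫ x in Set.Icc ((i:ℝ)/N) (((i:ℝ)+1)/N), (v : ℝ → ℂ) x ∂μ01)
            * F (((i:ℝ)+1)/N)) := by ring
    rw [this, sqrtNC N, mul_inv_cancel₀ hNC, one_mul]
  -- the limit as an integral against F
  have hT : (@inner ℂ _ _ v (V u))
      = ∫ x, (starRingEnd ℂ) ((v : ℝ → ℂ) x) * F x ∂μ01 := by
    rw [MeasureTheory.L2.inner_def]
    refine integral_congr_ae ?_
    filter_upwards [hV u] with x hx
    simp only [RCLike.inner_apply, hx, hF]
    exact mul_comm _ _
  -- measurability and boundedness of F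
  have hFmeas : AEStronglyMeasurable F μ01 := by
    have hcont : ContinuousOn (fun x => ∫ t in Set.Ioc (0:ℝ) x, (u : ℝ → ℂ) t ∂volume)
        (Set.Icc 0 1) := intervalIntegral.continuousOn_primitive huIcc
    have h2 : AEStronglyMeasurable _ μ01 := hcont.aestronglyMeasurable measurableSet_Icc
    refine AEStronglyMeasurable.congr h2 ?_
    refine (ae_restrict_mem measurableSet_Icc : ∀ᵐ x ∂μ01, x ∈ Set.Icc (0:ℝ) 1).mono
      fun x hx => ?_
    rw [hF]
    exact (intervalIntegral.integral_of_le hx.1).symm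
  have hFbd1 : ∀ x ∈ Set.Icc (0:ℝ) 1, ‖F x‖ ≤ ‖u‖ := by
    intro x hx
    have h := hFbd 0 x le_rfl hx.1 hx.2
    rw [hF0, sub_zero, sub_zero] at h
    refine h.trans ?_
    have h1 : Real.sqrt x ≤ 1 := Real.sqrt_le_one.mpr hx.2
    nlinarith [norm_nonneg u, Real.sqrt_nonneg x]
  set g : ℝ → ℂ := fun x => (starRingEnd ℂ) ((v : ℝ → ℂ) x) * F x with hg
  have hvconj : AEStronglyMeasurable (fun x => (starRingEnd ℂ) ((v : ℝ → ℂ) x)) μ01 :=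
    Complex.continuous_conj.comp_aestronglyMeasurable (Lp.aestronglyMeasurable v)
  have hgmeas : AEStronglyMeasurable g μ01 := hvconj.mul hFmeas
  have hgI : Integrable g μ01 := by
    refine Integrable.mono' (hvI.norm.const_mul ‖u‖) hgmeas ?_
    refine (ae_restrict_mem measurableSet_Icc : ∀ᵐ x ∂μ01, x ∈ Set.Icc (0:ℝ) 1).mono
      fun x hx => ?_
    calc ‖g x‖ = ‖(v : ℝ → ℂ) x‖ * ‖F x‖ := by
          rw [hg]; simp only [norm_mul, RCLike.norm_conj]
      _ ≤ ‖(v : ℝ → ℂ) x‖ * ‖u‖ :=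
          mul_le_mul_of_nonneg_left (hFbd1 x hx) (norm_nonneg _)
      _ = ‖u‖ * ‖(v : ℝ → ℂ) x‖ := mul_comm _ _
  set Cv : ℝ := ∫ x, ‖(v : ℝ → ℂ) x‖ ∂μ01 with hCv
  -- the quantitative bound
  have hmain : ∀ N : ℕ, 0 < N →
      ‖(∑ i : Fin N,
          (∫ x in Set.Icc ((i:ℝ)/N) (((i:ℝ)+1)/N),
            (starRingEnd ℂ) ((v : ℝ → ℂ) x) ∂μ01) * F (((i:ℝ)+1)/N))
        - ∫ x, g x ∂μ01‖ ≤ (‖u‖ * Cv) / Real.sqrt N := by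
    intro N hN
    have hNR : (0:ℝ) < N := by exact_mod_cast hN
    rw [hsplit g hgI N hN, ← Finset.sum_sub_distrib]
    have hterm : ∀ i : Fin N,
        (∫ x in Set.Icc ((i:ℝ)/N) (((i:ℝ)+1)/N),
            (starRingEnd ℂ) ((v : ℝ → ℂ) x) ∂μ01) * F (((i:ℝ)+1)/N)
          - ∫ x in Set.Ioc ((i:ℝ)/N) (((i:ℝ)+1)/N), g x ∂μ01
        = ∫ x in Set.Ioc ((i:ℝ)/N) (((i:ℝ)+1)/N),
            (starRingEnd ℂ) ((v : ℝ → ℂ) x) * (F (((i:ℝ)+1)/N) - F x) ∂μ01 := by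
      intro i
      rw [integral_Icc_eq_integral_Ioc]
      have e1 : (∫ x in Set.Ioc ((i:ℝ)/N) (((i:ℝ)+1)/N),
            (starRingEnd ℂ) ((v : ℝ → ℂ) x) ∂μ01) * F (((i:ℝ)+1)/N)
          = ∫ x in Set.Ioc ((i:ℝ)/N) (((i:ℝ)+1)/N),
              (starRingEnd ℂ) ((v : ℝ → ℂ) x) * F (((i:ℝ)+1)/N) ∂μ01 :=
        (integral_mul_const _ _).symm
      rw [e1, ← integral_sub]
      · refine setIntegral_congr_ae measurableSet_Ioc (ae_of_all _ fun x _ => ?_)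
        rw [hg]
        ring
      · have hvconjI : Integrable (fun x => (starRingEnd ℂ) ((v : ℝ → ℂ) x)) μ01 :=
          ⟨hvconj, by simpa [HasFiniteIntegral, RCLike.nnnorm_conj] using hvI.2⟩
        exact (hvconjI.mul_const _).integrableOn
      · exact hgI.integrableOn
    rw [Finset.sum_congr rfl (fun i _ => hterm i)]
    have hbound : ∀ i : Fin N,
        ‖∫ x in Set.Ioc ((i:ℝ)/N) (((i:ℝ)+1)/N),
            (starRingEnd ℂ) ((v : ℝ → ℂ) x) * (F (((i:ℝ)+1)/N) - F x) ∂μ01‖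
        ≤ ∫ x in Set.Ioc ((i:ℝ)/N) (((i:ℝ)+1)/N),
            ‖(v : ℝ → ℂ) x‖ * (‖u‖ / Real.sqrt N) ∂μ01 := by
      intro i
      refine norm_integral_le_of_norm_le ((hvI.norm.mul_const _).integrableOn) ?_
      refine (ae_restrict_mem measurableSet_Ioc).mono fun x hx => ?_
      rcases hx with ⟨hx1, hx2⟩
      have hxb : 0 ≤ x := le_trans (eN_bounds N i).1 (le_of_lt hx1)
      have hb1 : ((i:ℝ)+1)/N ≤ 1 := (eN_bounds N i).2
      have hdiff := hFbd x (((i:ℝ)+1)/N) hxb hx2 hb1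
      rw [norm_mul, RCLike.norm_conj]
      refine mul_le_mul_of_nonneg_left (hdiff.trans ?_) (norm_nonneg _)
      have h2 : ((i:ℝ)+1)/N - x ≤ 1/N := by
        have h3 : (i:ℝ)/N < x := hx1
        have h4 : ((i:ℝ)+1)/N - (i:ℝ)/N = 1/N := by ring
        linarith
      calc Real.sqrt (((i:ℝ)+1)/N - x) * ‖u‖
          ≤ Real.sqrt (1/N) * ‖u‖ :=
            mul_le_mul_of_nonneg_right (Real.sqrt_le_sqrt h2) (norm_nonneg u)
        _ = ‖u‖ / Real.sqrt N := by
            rw [one_div, Real.sqrt_inv]; ring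
    calc ‖∑ i : Fin N, ∫ x in Set.Ioc ((i:ℝ)/N) (((i:ℝ)+1)/N),
            (starRingEnd ℂ) ((v : ℝ → ℂ) x) * (F (((i:ℝ)+1)/N) - F x) ∂μ01‖
        ≤ ∑ i : Fin N, ‖∫ x in Set.Ioc ((i:ℝ)/N) (((i:ℝ)+1)/N),
            (starRingEnd ℂ) ((v : ℝ → ℂ) x) * (F (((i:ℝ)+1)/N) - F x) ∂μ01‖ :=
          norm_sum_le _ _
      _ ≤ ∑ i : Fin N, ∫ x in Set.Ioc ((i:ℝ)/N) (((i:ℝ)+1)/N),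
            ‖(v : ℝ → ℂ) x‖ * (‖u‖ / Real.sqrt N) ∂μ01 :=
          Finset.sum_le_sum (fun i _ => hbound i)
      _ = (∑ i : Fin N, ∫ x in Set.Ioc ((i:ℝ)/N) (((i:ℝ)+1)/N),
            ‖(v : ℝ → ℂ) x‖ ∂μ01) * (‖u‖ / Real.sqrt N) := by
          rw [Finset.sum_mul]
          exact Finset.sum_congr rfl fun i _ => integral_mul_const _ _
      _ = Cv * (‖u‖ / Real.sqrt N) := by
          rw [hCv, hsplit (fun x => ‖(v : ℝ → ℂ) x‖) hvI.norm N hN]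
      _ = (‖u‖ * Cv) / Real.sqrt N := by ring
  -- conclude
  rw [hT]
  have hs1 : Tendsto (fun N : ℕ => Real.sqrt (N:ℝ)) atTop atTop := by
    have h2 := (tendsto_rpow_atTop (by norm_num : (0:ℝ) < 1/2)).comp
      (tendsto_natCast_atTop_atTop (R := ℝ))
    refine h2.congr fun N => ?_
    simp only [Function.comp_apply]
    exact (Real.sqrt_eq_rpow _).symm
  have hsq : Tendsto (fun N : ℕ => (‖u‖ * Cv) / Real.sqrt N) atTop (nhds 0) :=
    Tendsto.div_atTop tendsto_const_nhds hs1
  have hev : ∀ᶠ N : ℕ in atTop,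
      ‖(∑ i : Fin N, ∑ j : Fin N, (if j ≤ i then (1:ℂ) else 0)
        * ((N:ℂ)⁻¹ * (@inner ℂ _ _ (eN N j) u) * (@inner ℂ _ _ v (eN N i))))
        - ∫ x, g x ∂μ01‖ ≤ (‖u‖ * Cv) / Real.sqrt N := by
    filter_upwards [eventually_ge_atTop 1] with N hN
    rw [hDN N hN]
    exact hmain N hN
  exact tendsto_sub_nhds_zero_iff.mp (squeeze_zero_norm' hev hsq)

/-- **Sparse Bernoulli example, polynomially sparse case.** Let the (unscaled)
lower-triangular entries `X_{i,j}^N` be i.i.d., equal to `1/δ(N) = N^d` with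
probability `δ(N) = N^{-d}` and `0` otherwise, where `0 < d < 1` (so the
entries of `X_N = (1/N)(X_{i,j}^N)` equal `1/(δ(N)N)` with probability `δ(N)`).
Then for all `u, v ∈ L²[0,1]`, almost surely
`⟨W_N X_N W_N^*(u), v⟩ → ⟨V(u), v⟩`. -/
theorem wot_like_convergence_polynomially_sparse_bernoulli
    {Ω : Type*} [MeasureSpace Ω] [IsProbabilityMeasure (ℙ : Measure Ω)]
    (X : (N : ℕ) → Fin N → Fin N → Ω → ℝ)
    (d : ℝ) (hd0 : 0 < d) (hd1 : d < 1)
    (hmeas : ∀ N (i j : Fin N), Measurable (X N i j))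
    (hzero : ∀ N (i j : Fin N), i < j → ∀ ω, X N i j ω = 0)
    (hindep : ∀ N, iIndepFun
      (fun p : LTri N => X N p.1.1 p.1.2) ℙ)
    (hvals : ∀ N (i j : Fin N), j ≤ i → ∀ ω,
      X N i j ω = (N : ℝ) ^ d ∨ X N i j ω = 0)
    (hprob : ∀ N (i j : Fin N), j ≤ i →
      ℙ {ω | X N i j ω = (N : ℝ) ^ d} = ENNReal.ofReal ((N : ℝ) ^ (-d)))
    (V : Lp ℂ 2 μ01 → Lp ℂ 2 μ01) (hV : IsVolterra V)
    (u v : Lp ℂ 2 μ01) :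
    ∀ᵐ ω ∂ℙ, Tendsto
      (fun N => (@inner ℂ _ _ v
        (Wmap N (matVec (XM N (X N) ω) (Wstar N u))) : ℂ))
      atTop (nhds (@inner ℂ _ _ v (V u))) := by
  classical
  set c : (N : ℕ) → Fin N → Fin N → ℂ := fun N i j =>
    (N:ℂ)⁻¹ * (@inner ℂ _ _ (eN N j) u) * (@inner ℂ _ _ v (eN N i)) with hcdef
  have hc : ∀ N : ℕ, ∑ i : Fin N, ∑ j : Fin N, ‖c N i j‖^2
      ≤ (‖u‖^2 * ‖v‖^2) * (((N:ℝ)^2)⁻¹) := by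
    intro N
    have hbesu : ∑ j : Fin N, ‖(@inner ℂ _ _ (eN N j) u : ℂ)‖^2 ≤ ‖u‖^2 := by
      simpa using (eN_orthonormal N).sum_inner_products_le u
    have hbesv : ∑ i : Fin N, ‖(@inner ℂ _ _ v (eN N i) : ℂ)‖^2 ≤ ‖v‖^2 := by
      have h2 : ∑ i : Fin N, ‖(@inner ℂ _ _ (eN N i) v : ℂ)‖^2 ≤ ‖v‖^2 := by
        simpa using (eN_orthonormal N).sum_inner_products_le v
      refine le_trans (le_of_eq (Finset.sum_congr rfl fun i _ => ?_)) h2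
      rw [norm_inner_symm]
    have hterm : ∀ (i j : Fin N), ‖c N i j‖^2
        = ((N:ℝ)^2)⁻¹ * (‖(@inner ℂ _ _ (eN N j) u : ℂ)‖^2
            * ‖(@inner ℂ _ _ v (eN N i) : ℂ)‖^2) := by
      intro i j
      simp only [hcdef]
      rw [norm_mul, norm_mul, norm_inv]
      have : ‖((N:ℕ):ℂ)‖ = (N:ℝ) := by
        rw [Complex.norm_natCast]
      rw [this]
      rw [mul_pow, mul_pow, inv_pow, mul_assoc]
    have key : ((N:ℝ)^2)⁻¹ * ((∑ j : Fin N, ‖(@inner ℂ _ _ (eN N j) u : ℂ)‖^2)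
          * (∑ i : Fin N, ‖(@inner ℂ _ _ v (eN N i) : ℂ)‖^2))
        = ∑ i : Fin N, ∑ j : Fin N, ((N:ℝ)^2)⁻¹
            * (‖(@inner ℂ _ _ (eN N j) u : ℂ)‖^2 * ‖(@inner ℂ _ _ v (eN N i) : ℂ)‖^2) := by
      rw [Finset.mul_sum, Finset.mul_sum]
      refine Finset.sum_congr rfl fun i _ => ?_
      rw [Finset.sum_mul, Finset.mul_sum]
    calc ∑ i : Fin N, ∑ j : Fin N, ‖c N i j‖^2
        = ∑ i : Fin N, ∑ j : Fin N, ((N:ℝ)^2)⁻¹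
            * (‖(@inner ℂ _ _ (eN N j) u : ℂ)‖^2 * ‖(@inner ℂ _ _ v (eN N i) : ℂ)‖^2) :=
          Finset.sum_congr rfl fun i _ => Finset.sum_congr rfl fun j _ => hterm i j
      _ = ((N:ℝ)^2)⁻¹ * ((∑ j : Fin N, ‖(@inner ℂ _ _ (eN N j) u : ℂ)‖^2)
            * (∑ i : Fin N, ‖(@inner ℂ _ _ v (eN N i) : ℂ)‖^2)) := key.symm
      _ ≤ ((N:ℝ)^2)⁻¹ * (‖u‖^2 * ‖v‖^2) := by
          refine mul_le_mul_of_nonneg_left ?_ (by positivity)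
          refine mul_le_mul hbesu hbesv ?_ ?_
          · exact Finset.sum_nonneg fun i _ => sq_nonneg _
          · positivity
      _ = (‖u‖^2 * ‖v‖^2) * (((N:ℝ)^2)⁻¹) := by ring
  have hprob' := prob_part X d hd0 hd1 hmeas hzero hindep hvals hprob c
    (‖u‖^2 * ‖v‖^2) hc
  have hdet := det_part V hV u v
  filter_upwards [hprob'] with ω hω
  have hsum := hω.add hdet
  rw [zero_add] at hsum
  refine Tendsto.congr (fun N => ?_) hsum
  rw [inner_expand N (XM N (X N) ω) u v, ← Finset.sum_add_distrib]
  refine Finset.sum_congr rfl fun i _ => ?_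
  rw [← Finset.sum_add_distrib]
  refine Finset.sum_congr rfl fun j _ => ?_
  simp only [hcdef, XM, Matrix.of_apply]
  split_ifs <;> ring


end
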